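/- Let n ≥ 1 and let c : [0,∞) → ℝⁿ be differentiable and satisfy c'(t) = A(t)·c(t) + b(t) for all t ≥ 0, where A : [0,∞) → (n×n real matrices) and b : [0,∞) → ℝⁿ are continuous, every off-diagonal entry of A(t) is nonnegative (A(t) is a Metzler matrix) for all t, and b(t) has all entries nonnegative for all t. If every entry of c(0) is nonnegative, then every entry of c(t) is nonnegative for all t ≥ 0. -/

import Mathlib

open Set Matrix Filter Topology

lemma metzler_aux {n : ℕ}
    (A : ℝ → Matrix (Fin n) (Fin n) ℝ) (b : ℝ → (Fin n → ℝ)) (c : ℝ → (Fin n → ℝ))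
    (hode : ∀ t ∈ Ici (0 : ℝ), HasDerivAt c (A t *ᵥ c t + b t) t)
    (hMetzler : ∀ t ∈ Ici (0 : ℝ), ∀ i j, i ≠ j → 0 ≤ A t i j)
    (hbnn : ∀ t ∈ Ici (0 : ℝ), ∀ i, 0 ≤ b t i)
    (h0 : ∀ i, 0 ≤ c 0 i)
    (T : ℝ) (hT : 0 ≤ T) (L : ℝ) (hL0 : 0 ≤ L)
    (hL : ∀ s ∈ Icc (0:ℝ) T, ∀ i j, |A s i j| ≤ L)
    (ε : ℝ) (hε : 0 < ε) :
    ∀ t ∈ Icc (0:ℝ) T, ∀ i, 0 < c t i + ε * Real.exp (((n : ℝ) * L + 1) * t) := by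
  set M : ℝ := (n : ℝ) * L + 1 with hM
  set d : Fin n → ℝ → ℝ := fun i t => c t i + ε * Real.exp (M * t) with hd
  have hd_deriv : ∀ s ∈ Ici (0:ℝ), ∀ i, HasDerivAt (d i)
      ((A s *ᵥ c s + b s) i + ε * (M * Real.exp (M * s))) s := by
    intro s hs i
    have h1 : HasDerivAt (fun t => c t i) ((A s *ᵥ c s + b s) i) s :=
      (hasDerivAt_pi.1 (hode s hs)) i
    have h2 : HasDerivAt (fun t => ε * Real.exp (M * t)) (ε * (M * Real.exp (M * s))) s := by
      have hlin : HasDerivAt (fun t : ℝ => M * t) M s := by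
        simpa using (hasDerivAt_id s).const_mul M
      have := (Real.hasDerivAt_exp (M * s)).comp s hlin
      have := this.const_mul ε
      convert this using 1
      all_goals first | rfl | ring
    exact h1.add h2
  by_contra hcon
  push_neg at hcon
  obtain ⟨t₀, ht₀, i₀, hti⟩ := hcon
  set S : Set ℝ := {s | s ∈ Icc (0:ℝ) T ∧ ∃ i, d i s ≤ 0} with hS
  have hScl : IsClosed S := by
    have heq : S = ⋃ i, (Icc (0:ℝ) T ∩ (fun s => d i s) ⁻¹' Iic 0) := by
      ext s
      simp only [hS, Set.mem_setOf_eq, Set.mem_iUnion, Set.mem_inter_iff, Set.mem_preimage,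
        Set.mem_Iic]
      tauto
    rw [heq]
    refine isClosed_iUnion_of_finite fun i => ?_
    refine ContinuousOn.preimage_isClosed_of_isClosed ?_ isClosed_Icc isClosed_Iic
    intro s hs
    exact ((hd_deriv s (Icc_subset_Ici_self hs) i).continuousAt).continuousWithinAt
  have hSne : S.Nonempty := ⟨t₀, ht₀, i₀, hti⟩
  have hSbdd : BddBelow S := ⟨0, fun s hs => hs.1.1⟩
  set τ := sInf S with hτ
  have hτS : τ ∈ S := hScl.csInf_mem hSne hSbdd
  obtain ⟨⟨hτ0, hτT⟩, i, hdi⟩ := hτS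
  have hlt : ∀ s, 0 ≤ s → s < τ → ∀ j, 0 < d j s := by
    intro s hs0 hsτ j
    by_contra h
    push_neg at h
    have hsS : s ∈ S := ⟨⟨hs0, hsτ.le.trans hτT⟩, j, h⟩
    exact absurd (csInf_le hSbdd hsS) (not_le.2 hsτ)
  have hτpos : 0 < τ := by
    rcases hτ0.lt_or_eq with h | h
    · exact h
    · exfalso
      have h1 : 0 < d i 0 := by
        have := h0 i
        simp only [hd, mul_zero, Real.exp_zero, mul_one]
        linarith
      rw [← h] at hdi
      linarith
  have hdτ : ∀ j, 0 ≤ d j τ := by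
    intro j
    have hcont : ContinuousAt (d j) τ := (hd_deriv τ hτ0 j).continuousAt
    have htend : Tendsto (d j) (𝓝[<] τ) (𝓝 (d j τ)) :=
      hcont.tendsto.mono_left nhdsWithin_le_nhds
    refine ge_of_tendsto htend ?_
    filter_upwards [Ioo_mem_nhdsLT hτpos] with s hs
    exact (hlt s hs.1.le hs.2 j).le
  have hdiτ : d i τ = 0 := le_antisymm hdi (hdτ i)
  set E := ε * Real.exp (M * τ) with hE
  have hEpos : 0 < E := by positivity
  have hcτj : ∀ j, -E ≤ c τ j := by
    intro j
    have := hdτ j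
    simp only [hd] at this
    linarith
  have hcτi : c τ i = -E := by
    have := hdiτ
    simp only [hd] at this
    linarith
  have hAτ := hL τ ⟨hτ0, hτT⟩
  have hsum : -((n : ℝ) * L * E) ≤ (A τ *ᵥ c τ) i := by
    have hterm : ∀ j, -(L * E) ≤ A τ i j * c τ j := by
      intro j
      rcases eq_or_ne j i with rfl | hji
      · rw [hcτi]
        have h1 : A τ j j ≤ L := (abs_le.1 (hAτ j j)).2
        have h2 : -L ≤ A τ j j := (abs_le.1 (hAτ j j)).1
        nlinarith [hEpos.le]
      · have hA0 : 0 ≤ A τ i j := hMetzler τ hτ0 i j (Ne.symm hji)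
        have hAle : A τ i j ≤ L := (abs_le.1 (hAτ i j)).2
        have := hcτj j
        nlinarith [hEpos.le]
    calc -((n : ℝ) * L * E) = ∑ _j : Fin n, -(L * E) := by
          simp [Finset.sum_const, Finset.card_univ]
          ring
      _ ≤ ∑ j, A τ i j * c τ j := Finset.sum_le_sum fun j _ => hterm j
      _ = (A τ *ᵥ c τ) i := by
          simp [Matrix.mulVec, dotProduct]
  have hD : 0 < (A τ *ᵥ c τ + b τ) i + ε * (M * Real.exp (M * τ)) := by
    have hbτ := hbnn τ hτ0 i
    have hrw : ε * (M * Real.exp (M * τ)) = M * E := by rw [hE]; ring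
    have hMeq : M * E = (n : ℝ) * L * E + E := by rw [hM]; ring
    simp only [Pi.add_apply]
    linarith [hsum, hEpos]
  have hder := hd_deriv τ hτ0 i
  have hslope := hasDerivAt_iff_tendsto_slope.1 hder
  have hmono : 𝓝[<] τ ≤ 𝓝[≠] τ := nhdsWithin_mono _ fun s hs => ne_of_lt hs
  have hevent : ∀ᶠ s in 𝓝[<] τ, 0 < slope (d i) τ s :=
    (hslope.mono_left hmono).eventually (eventually_gt_nhds hD)
  have hmem : ∀ᶠ s in 𝓝[<] τ, s ∈ Ioo (0:ℝ) τ := Ioo_mem_nhdsLT hτpos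
  obtain ⟨s, hsl, hs0, hsτ⟩ := (hevent.and hmem).exists
  have hpos := hlt s hs0.le hsτ i
  rw [slope_def_field, hdiτ, sub_zero] at hsl
  have hden : s - τ < 0 := by linarith
  rcases div_pos_iff.1 hsl with ⟨_, h2⟩ | ⟨h1, _⟩
  · linarith
  · linarith

/-- Nonnegativity of trajectories of a linear inhomogeneous ODE system
`c' = A(t) c + b(t)` with continuous time-dependent Metzler matrix `A(t)` and
nonnegative inhomogeneity `b(t)`. -/
theorem metzler_nonneg_invariance {n : ℕ} (hn : 1 ≤ n)
    (A : ℝ → Matrix (Fin n) (Fin n) ℝ) (b : ℝ → (Fin n → ℝ)) (c : ℝ → (Fin n → ℝ))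
    (hA : ContinuousOn A (Ici 0)) (hb : ContinuousOn b (Ici 0))
    (hode : ∀ t ∈ Ici (0 : ℝ), HasDerivAt c (A t *ᵥ c t + b t) t)
    (hMetzler : ∀ t ∈ Ici (0 : ℝ), ∀ i j, i ≠ j → 0 ≤ A t i j)
    (hbnn : ∀ t ∈ Ici (0 : ℝ), ∀ i, 0 ≤ b t i)
    (h0 : ∀ i, 0 ≤ c 0 i) :
    ∀ t ∈ Ici (0 : ℝ), ∀ i, 0 ≤ c t i := by
  intro t ht i
  have ht0 : (0:ℝ) ≤ t := ht
  -- bound on the entries of A on [0, t]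
  have hg : ContinuousOn (fun s => ∑ p : Fin n × Fin n, |A s p.1 p.2|) (Icc (0:ℝ) t) := by
    refine continuousOn_finset_sum _ fun p _ => ?_
    have hentry : ContinuousOn (fun s => A s p.1 p.2) (Icc (0:ℝ) t) := by
      have h1 : Continuous (fun m : Matrix (Fin n) (Fin n) ℝ => m p.1 p.2) :=
        (continuous_apply p.2).comp (continuous_apply p.1)
      exact h1.comp_continuousOn (hA.mono (Icc_subset_Ici_self))
    exact hentry.abs
  obtain ⟨C, hC⟩ := isCompact_Icc.exists_bound_of_continuousOn hg
  have h0mem : (0:ℝ) ∈ Icc (0:ℝ) t := ⟨le_refl 0, ht0⟩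
  have hC0 : 0 ≤ C := by
    have h1 := hC 0 h0mem
    have h2 : (0:ℝ) ≤ ∑ p : Fin n × Fin n, |A 0 p.1 p.2| :=
      Finset.sum_nonneg fun p _ => abs_nonneg _
    have := Real.norm_eq_abs (∑ p : Fin n × Fin n, |A 0 p.1 p.2|)
    rw [this, abs_of_nonneg h2] at h1
    linarith
  have hL : ∀ s ∈ Icc (0:ℝ) t, ∀ i j, |A s i j| ≤ C := by
    intro s hs i j
    have h1 := hC s hs
    rw [Real.norm_eq_abs] at h1
    have h2 : |A s i j| ≤ ∑ p : Fin n × Fin n, |A s p.1 p.2| := by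
      have := Finset.single_le_sum (f := fun p : Fin n × Fin n => |A s p.1 p.2|)
        (fun p _ => abs_nonneg _) (Finset.mem_univ (i, j))
      simpa using this
    have h3 := le_abs_self (∑ p : Fin n × Fin n, |A s p.1 p.2|)
    linarith
  by_contra hneg
  push_neg at hneg
  set ε : ℝ := -c t i / (2 * Real.exp (((n:ℝ) * C + 1) * t)) with hεdef
  have hε : 0 < ε := by
    have : 0 < -c t i := by linarith
    positivity
  have key := metzler_aux A b c hode hMetzler hbnn h0 t ht0 C hC0 hL ε hε t
    ⟨ht0, le_refl t⟩ i
  have hexp : ε * Real.exp (((n:ℝ) * C + 1) * t) = -c t i / 2 := by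
    rw [hεdef]
    field_simp
  rw [hexp] at key
  linarith
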